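/- arXiv:2008.13591 — 7 statements merged into one kernel-verified Lean document; each statement's English description precedes it below -/
import Mathlib

section
/- Let n be even, n ≥ 8, and 4 ≤ ℓ ≤ n/2. Identify vertices with residues mod n and let C_n be the Hamilton cycle (v_0, v_1, ..., v_{n-1}, v_0). Let e = (v_i, v_j) be a chord with (j - i) mod n ≥ ℓ/2 and (j - i) mod n ≤ n/2, and let f = {v_{(i+k) mod n}, v_{(j+ℓ-k-2) mod n}} for some integer 1 ≤ k ≤ ℓ/2 - 1. Then the graph C_n ∪ {e, f} contains a cycle of length ℓ and a cycle of length n - ℓ + 4. -/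
/-- `G` contains a cycle of length `m`. -/
def HasCycleLength {V : Type*} (G : SimpleGraph V) (m : ℕ) : Prop :=
  ∃ (v : V) (w : G.Walk v v), w.IsCycle ∧ w.length = m

open SimpleGraph

private def walkOf {V : Type*} (G : SimpleGraph V) (f : ℕ → V) :
    (m : ℕ) → (∀ t < m, G.Adj (f t) (f (t+1))) → G.Walk (f 0) (f m)
  | 0, _ => Walk.nil
  | (m+1), h => (walkOf G f m fun t ht => h t (by omega)).concat (h m (by omega))

private lemma walkOf_length {V : Type*} (G : SimpleGraph V) (f : ℕ → V) (m : ℕ)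
    (h : ∀ t < m, G.Adj (f t) (f (t+1))) : (walkOf G f m h).length = m := by
  induction m with
  | zero => rfl
  | succ m ih => simp [walkOf, ih]

private lemma walkOf_support {V : Type*} (G : SimpleGraph V) (f : ℕ → V) (m : ℕ)
    (h : ∀ t < m, G.Adj (f t) (f (t+1))) :
    (walkOf G f m h).support = (List.range (m+1)).map f := by
  induction m with
  | zero => rfl
  | succ m ih => simp [walkOf, ih, List.range_succ]

private lemma walkOf_edges_mem {V : Type*} (G : SimpleGraph V) (f : ℕ → V) (m : ℕ)
    (h : ∀ t < m, G.Adj (f t) (f (t+1))) (e : Sym2 V) (he : e ∈ (walkOf G f m h).edges) :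
    ∃ t < m, e = s(f t, f (t+1)) := by
  induction m with
  | zero => simp [walkOf] at he
  | succ m ih =>
    simp only [walkOf, Walk.edges_concat, List.concat_eq_append, List.mem_append,
      List.mem_singleton] at he
    rcases he with he | he
    · obtain ⟨t, ht, rfl⟩ := ih _ he
      exact ⟨t, by omega, rfl⟩
    · exact ⟨m, by omega, he⟩

private lemma hasCycleLength_of_fn {V : Type*} (G : SimpleGraph V) (m : ℕ) (hm : 3 ≤ m)
    (f : ℕ → V)
    (hadj : ∀ t < m, G.Adj (f t) (f (t+1)))
    (hclosed : f m = f 0)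
    (hinj : ∀ s < m, ∀ t < m, f s = f t → s = t) :
    HasCycleLength G m := by
  have hadj' : ∀ t < m - 1, G.Adj (f (t+1)) (f (t+1+1)) := fun t ht => hadj (t+1) (by omega)
  let p : G.Walk (f 1) (f (m-1+1)) := walkOf G (fun t => f (t+1)) (m-1) hadj'
  have hg : f (m-1+1) = f 0 := by rw [show m - 1 + 1 = m by omega, hclosed]
  let p' : G.Walk (f 1) (f 0) := p.copy rfl hg
  have hmem : ∀ e ∈ p'.edges, ∃ t, 1 ≤ t ∧ t < m ∧ e = s(f t, f (t+1)) := by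
    intro e he
    rw [Walk.edges_copy] at he
    obtain ⟨t, ht, rfl⟩ := walkOf_edges_mem G _ (m-1) hadj' e he
    exact ⟨t+1, by omega, by omega, rfl⟩
  have hpath : p'.IsPath := by
    rw [Walk.isPath_def, Walk.support_copy, walkOf_support]
    refine List.Nodup.map_on ?_ List.nodup_range
    intro s hs t ht hst
    rw [List.mem_range] at hs ht
    rcases eq_or_lt_of_le (show s + 1 ≤ m by omega) with h1 | h1 <;>
      rcases eq_or_lt_of_le (show t + 1 ≤ m by omega) with h2 | h2
    · omega
    · rw [h1, hclosed] at hst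
      have := hinj 0 (by omega) (t+1) h2 hst
      omega
    · rw [h2, hclosed] at hst
      have := hinj (s+1) h1 0 (by omega) hst
      omega
    · have := hinj (s+1) h1 (t+1) h2 hst
      omega
  have hne : s(f 0, f 1) ∉ p'.edges := by
    intro hmem'
    obtain ⟨t, ht1, ht2, hte⟩ := hmem _ hmem'
    rw [Sym2.eq_iff] at hte
    rcases hte with ⟨h1, h2⟩ | ⟨h1, h2⟩
    · have := hinj 0 (by omega) t ht2 h1; omega
    · by_cases htm : t + 1 < m
      · have := hinj 0 (by omega) (t+1) htm h1
        omega
      · have := hinj 1 (by omega) t ht2 h2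
        omega
  refine ⟨f 0, Walk.cons (hadj 0 (by omega)) p',
    (Walk.cons_isCycle_iff p' (hadj 0 (by omega))).2 ⟨hpath, hne⟩, ?_⟩
  simp only [Walk.length_cons, Walk.length_copy, p', p, walkOf_length]
  omega

theorem stmt0 (n ℓ : ℕ) (hn : 8 ≤ n) (hne : Even n) (hl : 4 ≤ ℓ) (hln : 2 * ℓ ≤ n)
    (i j : ZMod n) (k : ℕ)
    (hij1 : ℓ ≤ 2 * (j - i).val) (hij2 : 2 * (j - i).val ≤ n)
    (hk1 : 1 ≤ k) (hk2 : 2 * k ≤ ℓ - 2)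
    (G : SimpleGraph (ZMod n))
    (hG : G = SimpleGraph.fromRel (fun a b =>
      b = a + 1 ∨ (a = i ∧ b = j) ∨ (a = i + (k : ZMod n) ∧ b = j + (ℓ : ZMod n) - (k : ZMod n) - 2))) :
    HasCycleLength G ℓ ∧ HasCycleLength G (n - ℓ + 4) := by
  haveI : NeZero n := ⟨by omega⟩
  set d := (j - i).val with hd_def
  have hd : ((d : ℕ) : ZMod n) = j - i := by
    rw [hd_def]; exact ZMod.natCast_rightInverse (j - i)
  have hkd : k + 1 ≤ d := by omega
  have hkl : k + 3 ≤ ℓ := by omega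
  have hsum : d + ℓ ≤ n := by omega
  have castinj : ∀ a b : ℕ, a < n → b < n → ((a : ZMod n) = (b : ZMod n)) → a = b := by
    intro a b ha hb h
    have := congrArg ZMod.val h
    rwa [ZMod.val_cast_of_lt ha, ZMod.val_cast_of_lt hb] at this
  have hchordf : i + ((d + ℓ - k - 2 : ℕ) : ZMod n) = j + (ℓ : ZMod n) - (k : ZMod n) - 2 := by
    rw [show d + ℓ - k - 2 = (d + ℓ) - (k + 2) from by omega, Nat.cast_sub (by omega)]
    push_cast
    rw [hd]
    ring
  subst hG
  constructor
  · -- cycle of length ℓ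
    set f : ℕ → ZMod n := fun t =>
      i + (((if t ≤ k then k - t else if t < ℓ then d + t - k - 1 else k) : ℕ) : ZMod n)
      with hf_def
    have fA : ∀ t, t ≤ k → f t = i + ((k - t : ℕ) : ZMod n) := by
      intro t ht; simp only [hf_def]; rw [if_pos ht]
    have fB : ∀ t, k < t → t < ℓ → f t = i + ((d + t - k - 1 : ℕ) : ZMod n) := by
      intro t h1 h2; simp only [hf_def]; rw [if_neg (by omega), if_pos h2]
    have fC : f ℓ = i + ((k : ℕ) : ZMod n) := by
      simp only [hf_def]; rw [if_neg (by omega), if_neg (by omega)]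
    have hclosed : f ℓ = f 0 := by
      rw [fC, fA 0 (by omega)]
      simp
    have hinjf : ∀ s < ℓ, ∀ t < ℓ, f s = f t → s = t := by
      intro s hs t ht hst
      simp only [hf_def] at hst
      have h := castinj _ _ (by split_ifs <;> omega) (by split_ifs <;> omega)
        (add_left_cancel hst)
      split_ifs at h <;> omega
    have hnef : ∀ t < ℓ, f t ≠ f (t+1) := by
      intro t ht h
      rcases eq_or_lt_of_le (show t + 1 ≤ ℓ by omega) with h1 | h1
      · rw [h1, hclosed] at h
        have := hinjf t ht 0 (by omega) h
        omega
      · have := hinjf t ht (t+1) h1 h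
        omega
    refine hasCycleLength_of_fn _ ℓ (by omega) f ?_ hclosed hinjf
    intro t ht
    rw [SimpleGraph.fromRel_adj]
    refine ⟨hnef t ht, ?_⟩
    by_cases h1 : t < k
    · right; left
      rw [fA t (by omega), fA (t+1) (by omega),
        show k - t = (k - (t+1)) + 1 from by omega]
      push_cast
      ring
    · by_cases h2 : t = k
      · left; right; left
        constructor
        · rw [h2, fA k le_rfl]
          simp
        · rw [h2, fB (k+1) (by omega) (by omega),
            show d + (k+1) - k - 1 = d from by omega, hd]
          ring
      · by_cases h3 : t + 1 < ℓ
        · left; left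
          rw [fB t (by omega) (by omega), fB (t+1) (by omega) h3,
            show d + (t+1) - k - 1 = (d + t - k - 1) + 1 from by omega]
          push_cast
          ring
        · -- t = ℓ - 1 : chord f
          have ht1 : t + 1 = ℓ := by omega
          right; right; right
          constructor
          · rw [ht1, fC]
          · rw [fB t (by omega) (by omega),
              show d + t - k - 1 = d + ℓ - k - 2 from by omega]
            exact hchordf
  · -- cycle of length n - ℓ + 4
    set m := n - ℓ + 4 with hm_def
    have hdm : d - k + 1 < m := by omega
    set f : ℕ → ZMod n := fun t =>
      i + (((if t = 0 then 0 else if t ≤ d - k + 1 then d + 1 - t else t + ℓ - 4) : ℕ) : ZMod n)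
      with hf_def
    have fA : f 0 = i := by
      simp only [hf_def]; simp
    have fB : ∀ t, 1 ≤ t → t ≤ d - k + 1 → f t = i + ((d + 1 - t : ℕ) : ZMod n) := by
      intro t h1 h2; simp only [hf_def]; rw [if_neg (by omega), if_pos h2]
    have fC : ∀ t, d - k + 1 < t → f t = i + ((t + ℓ - 4 : ℕ) : ZMod n) := by
      intro t h1; simp only [hf_def]; rw [if_neg (by omega), if_neg (by omega)]
    have hclosed : f m = f 0 := by
      rw [fA, fC m hdm, show m + ℓ - 4 = n from by omega]
      simp
    have hinjf : ∀ s < m, ∀ t < m, f s = f t → s = t := by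
      intro s hs t ht hst
      simp only [hf_def] at hst
      have h := castinj _ _ (by split_ifs <;> omega) (by split_ifs <;> omega)
        (add_left_cancel hst)
      split_ifs at h <;> omega
    have hnef : ∀ t < m, f t ≠ f (t+1) := by
      intro t ht h
      rcases eq_or_lt_of_le (show t + 1 ≤ m by omega) with h1 | h1
      · rw [h1, hclosed] at h
        have := hinjf t ht 0 (by omega) h
        omega
      · have := hinjf t ht (t+1) h1 h
        omega
    refine hasCycleLength_of_fn _ m (by omega) f ?_ hclosed hinjf
    intro t ht
    rw [SimpleGraph.fromRel_adj]
    refine ⟨hnef t ht, ?_⟩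
    by_cases h1 : t = 0
    · subst h1
      left; right; left
      refine ⟨fA, ?_⟩
      rw [fB 1 le_rfl (by omega), show d + 1 - 1 = d from by omega, hd]
      ring
    · by_cases h2 : t ≤ d - k
      · right; left
        rw [fB t (by omega) (by omega), fB (t+1) (by omega) (by omega),
          show d + 1 - t = (d + 1 - (t+1)) + 1 from by omega]
        push_cast
        ring
      · by_cases h3 : t = d - k + 1
        · subst h3
          left; right; right
          constructor
          · rw [fB (d - k + 1) (by omega) le_rfl,
              show d + 1 - (d - k + 1) = k from by omega]
          · rw [fC (d - k + 1 + 1) (by omega),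
              show d - k + 1 + 1 + ℓ - 4 = d + ℓ - k - 2 from by omega]
            exact hchordf
        · left; left
          rw [fC t (by omega), fC (t+1) (by omega),
            show t + 1 + ℓ - 4 = (t + ℓ - 4) + 1 from by omega]
          push_cast
          ring
end

section
/- Let M' be a matching on V = {v_0, ..., v_{n-1}} and let X_{M'} be the auxiliary graph on V with edge set ⋃{ F_{e,ℓ} : e ∈ M' ∩ E_ℓ }. Then the maximum degree of X_{M'} is at most ℓ - 3. -/
/-- The set of ordered chords `(v_i, v_j)` with `ℓ/2 ≤ (j - i) mod n ≤ n/2`. -/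
def chordSet (n ℓ : ℕ) [NeZero n] : Finset (ZMod n × ZMod n) :=
  Finset.univ.filter (fun p => ℓ ≤ 2 * (p.2 - p.1).val ∧ 2 * (p.2 - p.1).val ≤ n)

/-- The switching set `F_{e,ℓ}` of unordered pairs associated to a chord `e`. -/
def switchSet (n ℓ : ℕ) [NeZero n] (e : ZMod n × ZMod n) : Finset (Sym2 (ZMod n)) :=
  (Finset.Icc 1 (ℓ / 2 - 1)).image
    (fun k : ℕ => s(e.1 + (k : ZMod n), e.2 + (ℓ : ZMod n) - (k : ZMod n) - 2))

/-- cross case is impossible -/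
lemma aux_cross (n ℓ : ℕ) [NeZero n] (hl : 4 ≤ ℓ) (hln : 2 * ℓ ≤ n)
    (e : ZMod n × ZMod n) (he : e ∈ chordSet n ℓ) (k1 k2 : ℕ)
    (hk1 : k1 ∈ Finset.Icc 1 (ℓ / 2 - 1)) (hk2 : k2 ∈ Finset.Icc 1 (ℓ / 2 - 1))
    (heq : e.1 + (k1 : ZMod n) = e.2 + (ℓ : ZMod n) - (k2 : ZMod n) - 2) : False := by
  simp only [chordSet, Finset.mem_filter, Finset.mem_univ, true_and] at he
  simp only [Finset.mem_Icc] at hk1 hk2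
  set d : ℕ := ℓ - (k1 + k2 + 2) with hd
  have hsum : k1 + k2 + 2 ≤ ℓ := by omega
  have hdl : d ≤ ℓ - 4 := by omega
  have hℓeq : ℓ = k1 + k2 + 2 + d := by omega
  have hcast : (ℓ : ZMod n) = (k1 : ZMod n) + k2 + 2 + d := by
    rw [hℓeq]; push_cast; ring
  have hee : e.2 - e.1 = -(d : ZMod n) := by
    rw [hcast] at heq
    linear_combination -heq
  rcases Nat.eq_zero_or_pos d with h0 | hpos
  · rw [h0] at hee
    simp at hee
    rw [hee] at he
    simp at he
    omega
  · have hdn : d < n := by omega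
    have hv : ((d : ZMod n)).val = d := ZMod.val_cast_of_lt hdn
    have hne : (d : ZMod n) ≠ 0 := by
      intro h
      rw [h] at hv
      simp [ZMod.val_zero] at hv
      omega
    have : (-(d : ZMod n)).val = n - d := by
      rw [ZMod.neg_val]
      simp [hne, hv]
    rw [hee, this] at he
    omega

/-- for a fixed chord, the index k of a pair containing v is unique -/
lemma aux_uniq (n ℓ : ℕ) [NeZero n] (hl : 4 ≤ ℓ) (hln : 2 * ℓ ≤ n)
    (e : ZMod n × ZMod n) (he : e ∈ chordSet n ℓ) (v : ZMod n) (k k' : ℕ)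
    (hk : k ∈ Finset.Icc 1 (ℓ / 2 - 1)) (hk' : k' ∈ Finset.Icc 1 (ℓ / 2 - 1))
    (hv : v = e.1 + (k : ZMod n) ∨ v = e.2 + (ℓ : ZMod n) - (k : ZMod n) - 2)
    (hv' : v = e.1 + (k' : ZMod n) ∨ v = e.2 + (ℓ : ZMod n) - (k' : ZMod n) - 2) :
    k = k' := by
  have hkn : k < n := by
    simp only [Finset.mem_Icc] at hk; omega
  have hk'n : k' < n := by
    simp only [Finset.mem_Icc] at hk'; omega
  rcases hv with h1 | h1 <;> rcases hv' with h2 | h2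
  · have : (k : ZMod n) = (k' : ZMod n) := by
      have := h1.symm.trans h2
      linear_combination this
    have := congrArg ZMod.val this
    rwa [ZMod.val_cast_of_lt hkn, ZMod.val_cast_of_lt hk'n] at this
  · exact absurd (h1.symm.trans h2) (fun h => aux_cross n ℓ hl hln e he k k' hk hk' h)
  · exact absurd (h2.symm.trans h1) (fun h => aux_cross n ℓ hl hln e he k' k hk' hk h)
  · have : (k : ZMod n) = (k' : ZMod n) := by
      have := h1.symm.trans h2
      linear_combination -this
    have := congrArg ZMod.val this
    rwa [ZMod.val_cast_of_lt hkn, ZMod.val_cast_of_lt hk'n] at this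

theorem stmt3 (n ℓ : ℕ) [NeZero n] (hn : 8 ≤ n) (hl : 4 ≤ ℓ) (hln : 2 * ℓ ≤ n)
    (M' : Finset (ZMod n × ZMod n))
    (hM'ne : ∀ e ∈ M', e.1 ≠ e.2)
    (hM'disj : ∀ e ∈ M', ∀ f ∈ M', e ≠ f →
      ({e.1, e.2} : Set (ZMod n)) ∩ {f.1, f.2} = ∅) :
    ∀ v : ZMod n,
      (((M'.filter (· ∈ chordSet n ℓ)).biUnion (switchSet n ℓ)).filter
          (fun s => v ∈ s)).card ≤ ℓ - 3 := by
  intro v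
  classical
  set S := (((M'.filter (· ∈ chordSet n ℓ)).biUnion (switchSet n ℓ)).filter
      (fun s => v ∈ s)) with hS
  set T : Finset (ZMod n) := (Finset.Icc 1 (ℓ - 3)).image (fun k : ℕ => v - (k : ZMod n)) with hT
  -- the predicate used for the choice function
  set P : Sym2 (ZMod n) → ((ZMod n × ZMod n) × ℕ) → Prop :=
    fun p ek => ek.1 ∈ M' ∧ ek.1 ∈ chordSet n ℓ ∧ ek.2 ∈ Finset.Icc 1 (ℓ / 2 - 1) ∧
      p = s(ek.1.1 + (ek.2 : ZMod n), ek.1.2 + (ℓ : ZMod n) - (ek.2 : ZMod n) - 2) with hP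
  have hex : ∀ p ∈ S, ∃ ek, P p ek := by
    intro p hp
    rw [hS, Finset.mem_filter, Finset.mem_biUnion] at hp
    obtain ⟨⟨e, he, hpe⟩, hvp⟩ := hp
    rw [Finset.mem_filter] at he
    rw [switchSet, Finset.mem_image] at hpe
    obtain ⟨k, hk, hpk⟩ := hpe
    exact ⟨⟨e, k⟩, he.1, he.2, hk, hpk.symm⟩
  -- choice function
  let f : Sym2 (ZMod n) → ZMod n := fun p =>
    if h : ∃ ek, P p ek then
      (if v = h.choose.1.1 + (h.choose.2 : ZMod n) then h.choose.1.1 else h.choose.1.2)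
    else v
  -- membership of v in the chosen pair gives the disjunction
  have hdisj : ∀ p ∈ S, ∀ ek, P p ek →
      v = ek.1.1 + (ek.2 : ZMod n) ∨ v = ek.1.2 + (ℓ : ZMod n) - (ek.2 : ZMod n) - 2 := by
    intro p hp ek hPek
    rw [hS, Finset.mem_filter] at hp
    have hvp := hp.2
    rw [hPek.2.2.2] at hvp
    simpa [Sym2.mem_iff] using hvp
  have hmem : ∀ p ∈ S, f p ∈ T := by
    intro p hp
    have h := hex p hp
    simp only [f, dif_pos h]
    obtain ⟨heM, hec, hk, hpk⟩ := h.choose_spec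
    set e := h.choose.1
    set k := h.choose.2
    simp only [Finset.mem_Icc] at hk
    have hk3 : k ≤ ℓ - 3 := by omega
    by_cases hcase : v = e.1 + (k : ZMod n)
    · rw [if_pos hcase]
      rw [hT, Finset.mem_image]
      exact ⟨k, Finset.mem_Icc.2 ⟨hk.1, hk3⟩, by rw [hcase]; ring⟩
    · rw [if_neg hcase]
      have hv2 : v = e.2 + (ℓ : ZMod n) - (k : ZMod n) - 2 := by
        rcases hdisj p hp h.choose h.choose_spec with h' | h'
        · exact absurd h' hcase
        · exact h'
      rw [hT, Finset.mem_image]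
      refine ⟨ℓ - 2 - k, Finset.mem_Icc.2 ⟨by omega, by omega⟩, ?_⟩
      have hcast : ((ℓ - 2 - k : ℕ) : ZMod n) = (ℓ : ZMod n) - 2 - k := by
        have h1 : (ℓ - 2 - k) + (k + 2) = ℓ := by omega
        have h2 := congrArg (Nat.cast : ℕ → ZMod n) h1
        push_cast at h2
        linear_combination h2
      rw [hcast, hv2]
      ring
  have hinj : Set.InjOn f S := by
    intro p hp p' hp' hfeq
    rw [Finset.mem_coe] at hp hp'
    have h := hex p hp
    have h' := hex p' hp'
    obtain ⟨heM, hec, hk, hpk⟩ := h.choose_spec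
    obtain ⟨heM', hec', hk', hpk'⟩ := h'.choose_spec
    set e := h.choose.1
    set k := h.choose.2
    set e' := h'.choose.1
    set k' := h'.choose.2
    have hfp1 : f p = e.1 ∨ f p = e.2 := by
      simp only [f, dif_pos h]
      split <;> simp [e]
    have hfp2 : f p' = e'.1 ∨ f p' = e'.2 := by
      simp only [f, dif_pos h']
      split <;> simp [e']
    by_cases hee : e = e'
    · -- same chord: unique k
      have hd := hdisj p hp h.choose h.choose_spec
      have hd'0 := hdisj p' hp' h'.choose h'.choose_spec
      have hd' : v = e.1 + (k' : ZMod n) ∨ v = e.2 + (ℓ : ZMod n) - (k' : ZMod n) - 2 := by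
        rw [hee]; exact hd'0
      have hkk : k = k' := aux_uniq n ℓ hl hln e hec v k k' hk hk' hd hd'
      rw [hpk, hpk', hkk, hee]
    · -- distinct chords: endpoints disjoint
      exfalso
      have hdisj2 := hM'disj e heM e' heM' hee
      have hmem1 : f p ∈ ({e.1, e.2} : Set (ZMod n)) := by
        rcases hfp1 with h1 | h1 <;> simp [h1]
      have hmem2 : f p ∈ ({e'.1, e'.2} : Set (ZMod n)) := by
        rw [hfeq]
        rcases hfp2 with h1 | h1 <;> simp [h1]
      have : f p ∈ ({e.1, e.2} : Set (ZMod n)) ∩ {e'.1, e'.2} := ⟨hmem1, hmem2⟩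
      rw [hdisj2] at this
      exact this
  calc S.card ≤ T.card := Finset.card_le_card_of_injOn f hmem hinj
    _ ≤ (Finset.Icc 1 (ℓ - 3)).card := Finset.card_image_le
    _ = ℓ - 3 := by rw [Nat.card_Icc]; omega
end

section
/- Directed shortcut lemma: let 4 ≤ ℓ ≤ n - 4 and let ⃗C_n be the directed cycle with edges (v_i, v_{(i+1) mod n}). Let ⃗e = (v_i, v_j) be a directed chord with (j - i) mod n ∈ [2, n - ℓ], and let ⃗f = (v_{(j+ℓ-k-2) mod n}, v_{(i-k) mod n}) for some integer 0 ≤ k ≤ ℓ - 2. Then the directed graph ⃗C_n ∪ {⃗e, ⃗f} contains a directed cycle of length ℓ. -/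
/-- A directed graph (given as a relation `r`) contains a directed cycle of length `ℓ`:
a closed directed walk through `ℓ` distinct vertices. -/
def HasDirCycleLength {V : Type*} (r : V → V → Prop) (ℓ : ℕ) : Prop :=
  ∃ g : ZMod ℓ → V, Function.Injective g ∧ ∀ t : ZMod ℓ, r (g t) (g (t + 1))

/-- Offset (from `i`) of the `t`-th vertex of the shortcut cycle. -/
def oaux (n ℓ d k t : ℕ) : ℕ :=
  if t = 0 then 0 else if t ≤ ℓ - k - 1 then d + t - 1 else n - ℓ + t

theorem stmt4 (n ℓ : ℕ) [NeZero n] (hn : 8 ≤ n) (hl : 4 ≤ ℓ) (hln : ℓ ≤ n - 4)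
    (i j : ZMod n) (k : ℕ)
    (hij1 : 2 ≤ (j - i).val) (hij2 : (j - i).val ≤ n - ℓ)
    (hk : k ≤ ℓ - 2)
    (r : ZMod n → ZMod n → Prop)
    (hr : r = fun a b => b = a + 1 ∨ (a = i ∧ b = j) ∨
      (a = j + (ℓ : ZMod n) - (k : ZMod n) - 2 ∧ b = i - (k : ZMod n))) :
    HasDirCycleLength r ℓ := by
  subst hr
  haveI : NeZero ℓ := ⟨by omega⟩
  set d := (j - i).val with hd
  have hj : j = i + (d : ZMod n) := by
    rw [hd, ZMod.natCast_val, ZMod.cast_id]; ring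
  have hℓn : ℓ + 4 ≤ n := by omega
  have hdℓ : d + ℓ ≤ n := by omega
  have hk2 : k + 2 ≤ ℓ := by omega
  have hobd : ∀ t, t < ℓ → oaux n ℓ d k t < n := by
    intro t ht; unfold oaux; split_ifs <;> omega
  refine ⟨fun t => i + ((oaux n ℓ d k t.val : ℕ) : ZMod n), ?_, ?_⟩
  · intro a b hab
    have ha : a.val < ℓ := ZMod.val_lt a
    have hb : b.val < ℓ := ZMod.val_lt b
    have h1 : ((oaux n ℓ d k a.val : ℕ) : ZMod n) = ((oaux n ℓ d k b.val : ℕ) : ZMod n) :=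
      add_left_cancel hab
    have h2 : oaux n ℓ d k a.val = oaux n ℓ d k b.val := by
      calc oaux n ℓ d k a.val
          = ((oaux n ℓ d k a.val : ℕ) : ZMod n).val := (ZMod.val_cast_of_lt (hobd _ ha)).symm
        _ = ((oaux n ℓ d k b.val : ℕ) : ZMod n).val := by rw [h1]
        _ = oaux n ℓ d k b.val := ZMod.val_cast_of_lt (hobd _ hb)
    have h3 : a.val = b.val := by
      unfold oaux at h2; split_ifs at h2 <;> omega
    exact ZMod.val_injective ℓ h3
  · intro t
    beta_reduce
    have ht : t.val < ℓ := ZMod.val_lt t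
    have hsucc : (t + 1).val = (t.val + 1) % ℓ := by
      rw [ZMod.val_add, ZMod.val_one_eq_one_mod, Nat.mod_eq_of_lt (by omega : 1 < ℓ)]
    -- case analysis on t.val
    rcases (by omega : t.val = 0 ∨ (1 ≤ t.val ∧ t.val ≤ ℓ - k - 2) ∨ t.val = ℓ - k - 1 ∨
        (ℓ - k ≤ t.val ∧ t.val ≤ ℓ - 2) ∨ (t.val = ℓ - 1 ∧ 1 ≤ k)) with h0 | hm | hc | htl | hlast
    · -- chord e : i → j
      have e1 : oaux n ℓ d k t.val = 0 := by rw [h0]; unfold oaux; simp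
      have hs : (t + 1).val = 1 := by rw [hsucc, h0, Nat.mod_eq_of_lt (by omega)]
      have e2 : oaux n ℓ d k (t + 1).val = d := by
        rw [hs]; unfold oaux; rw [if_neg (by omega), if_pos (by omega)]; omega
      refine Or.inr (Or.inl ⟨?_, ?_⟩)
      · rw [e1]; simp
      · rw [e2, hj]
    · -- middle of the j-segment
      have hs : (t + 1).val = t.val + 1 := by rw [hsucc]; exact Nat.mod_eq_of_lt (by omega)
      have e1 : oaux n ℓ d k t.val = d + t.val - 1 := by
        unfold oaux; rw [if_neg (by omega), if_pos (by omega)]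
      have e2 : oaux n ℓ d k (t + 1).val = d + t.val := by
        rw [hs]; unfold oaux; rw [if_neg (by omega), if_pos (by omega)]; omega
      refine Or.inl ?_
      rw [e1, e2, (by omega : d + t.val = (d + t.val - 1) + 1)]
      push_cast
      ring
    · -- chord f : j + ℓ - k - 2 → i - k
      have e1 : oaux n ℓ d k t.val = d + (ℓ - (k + 2)) := by
        unfold oaux; rw [if_neg (by omega), if_pos (by omega)]; omega
      refine Or.inr (Or.inr ⟨?_, ?_⟩)
      · rw [e1, hj]
        push_cast [Nat.cast_sub hk2]
        ring
      · rcases Nat.eq_zero_or_pos k with hk0 | hk1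
        · have hs : (t + 1).val = 0 := by
            rw [hsucc, hc, (by omega : ℓ - k - 1 + 1 = ℓ), Nat.mod_self]
          have e2 : oaux n ℓ d k (t + 1).val = 0 := by rw [hs]; unfold oaux; simp
          rw [e2]; subst hk0; simp
        · have hs : (t + 1).val = ℓ - k := by
            rw [hsucc, hc, (by omega : ℓ - k - 1 + 1 = ℓ - k), Nat.mod_eq_of_lt (by omega)]
          have e2 : oaux n ℓ d k (t + 1).val = n - k := by
            rw [hs]; unfold oaux; rw [if_neg (by omega), if_neg (by omega)]; omega
          rw [e2]
          have : ((n - k : ℕ) : ZMod n) = (n : ZMod n) - (k : ZMod n) := by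
            push_cast [Nat.cast_sub (by omega : k ≤ n)]; ring
          rw [this, ZMod.natCast_self]
          ring
    · -- middle of the tail segment
      have hs : (t + 1).val = t.val + 1 := by rw [hsucc]; exact Nat.mod_eq_of_lt (by omega)
      have e1 : oaux n ℓ d k t.val = n - ℓ + t.val := by
        unfold oaux; rw [if_neg (by omega), if_neg (by omega)]
      have e2 : oaux n ℓ d k (t + 1).val = n - ℓ + t.val + 1 := by
        rw [hs]; unfold oaux; rw [if_neg (by omega), if_neg (by omega)]; omega
      refine Or.inl ?_
      rw [e1, e2]
      push_cast
      ring
    · -- last edge : i - 1 → i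
      have hs : (t + 1).val = 0 := by
        rw [hsucc, hlast.1, (by omega : ℓ - 1 + 1 = ℓ), Nat.mod_self]
      have e1 : oaux n ℓ d k t.val = n - 1 := by
        unfold oaux; rw [if_neg (by omega), if_neg (by omega)]; omega
      have e2 : oaux n ℓ d k (t + 1).val = 0 := by rw [hs]; unfold oaux; simp
      refine Or.inl ?_
      rw [e1, e2, Nat.cast_sub (by omega : 1 ≤ n), ZMod.natCast_self]
      push_cast
      ring
end

section
/- In the directed setting: if ⃗e = (v_i, v_j) ∈ E_ℓ, then every element of F_{⃗e,ℓ} also belongs to E_ℓ. More precisely, for ⃗f = (v_{(j+ℓ-k-2) mod n}, v_{(i-k) mod n}) with 0 ≤ k ≤ ℓ - 2, the difference of endpoint indices of ⃗f modulo n equals n - ℓ + 2 - ((j - i) mod n), which lies in {2, ..., n - ℓ}. -/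
theorem stmt5 (n ℓ : ℕ) [NeZero n] (hn : 8 ≤ n) (hl : 4 ≤ ℓ) (hln : ℓ ≤ n - 4)
    (i j : ZMod n) (k : ℕ)
    (hij1 : 2 ≤ (j - i).val) (hij2 : (j - i).val ≤ n - ℓ)
    (hk : k ≤ ℓ - 2) :
    ((i - (k : ZMod n)) - (j + (ℓ : ZMod n) - (k : ZMod n) - 2)).val
        = n - ℓ + 2 - (j - i).val
      ∧ 2 ≤ ((i - (k : ZMod n)) - (j + (ℓ : ZMod n) - (k : ZMod n) - 2)).val
      ∧ ((i - (k : ZMod n)) - (j + (ℓ : ZMod n) - (k : ZMod n) - 2)).val ≤ n - ℓ := by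
  set d := (j - i).val with hd
  set m := n - ℓ + 2 - d with hm
  have hℓn : ℓ ≤ n := by omega
  have hmeq : m + (ℓ + d) = n + 2 := by omega
  have hji : ((d : ℕ) : ZMod n) = j - i := by
    rw [hd, ZMod.natCast_val, ZMod.cast_id]
  have hn0 : ((n : ℕ) : ZMod n) = 0 := ZMod.natCast_self n
  have hcast : ((m : ℕ) : ZMod n) = (2 : ZMod n) - (ℓ : ZMod n) - (d : ZMod n) := by
    have h := congrArg (Nat.cast : ℕ → ZMod n) hmeq
    push_cast at h
    linear_combination h + hn0
  have key : (i - (k : ZMod n)) - (j + (ℓ : ZMod n) - (k : ZMod n) - 2) = ((m : ℕ) : ZMod n) := by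
    rw [hcast]
    linear_combination hji
  have hval : ((i - (k : ZMod n)) - (j + (ℓ : ZMod n) - (k : ZMod n) - 2)).val = m := by
    rw [key, ZMod.val_cast_of_lt (by omega)]
  refine ⟨hval, ?_, ?_⟩ <;> rw [hval] <;> omega
end

section
/- If two distinct undirected chords e_1 = (v_i, v_j) and e_2 = (v_{i'}, v_{j'}) in E_ℓ satisfy F_{e_1,ℓ} ∩ F_{e_2,ℓ} ≠ ∅, then modulo n either (i' ≡ i + d and j' ≡ j - d) for some d with |d| ≤ ⌊ℓ/2⌋ - 2, d ≠ 0, or i' + j' ≡ i + j. -/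
theorem stmt8 (n ℓ : ℕ) [NeZero n] (hn : 8 ≤ n) (hl : 4 ≤ ℓ) (hln : 2 * ℓ ≤ n + 4)
    (i j i' j' : ZMod n)
    (h1 : (i, j) ∈ chordSet n ℓ) (h2 : (i', j') ∈ chordSet n ℓ)
    (hne : (i, j) ≠ (i', j'))
    (hint : (switchSet n ℓ (i, j) ∩ switchSet n ℓ (i', j')).Nonempty) :
    (∃ d : ℤ, d ≠ 0 ∧ d.natAbs ≤ ℓ / 2 - 2 ∧
        i' = i + (d : ZMod n) ∧ j' = j - (d : ZMod n))
      ∨ i' + j' = i + j := by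
  obtain ⟨s, hs⟩ := hint
  simp only [Finset.mem_inter, switchSet, Finset.mem_image, Finset.mem_Icc] at hs
  obtain ⟨⟨k, ⟨hk1, hk2⟩, hks⟩, ⟨k', ⟨hk'1, hk'2⟩, hk's⟩⟩ := hs
  rw [← hk's, Sym2.eq_iff] at hks
  rcases hks with ⟨ha, hb⟩ | ⟨ha, hb⟩
  · left
    by_cases hkk : k = k'
    · subst hkk
      exact absurd (Prod.ext (by linear_combination ha) (by linear_combination hb)) hne
    · refine ⟨(k : ℤ) - (k' : ℤ), by omega, by omega, ?_, ?_⟩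
      · push_cast
        linear_combination -ha
      · push_cast
        linear_combination -hb
  · right
    linear_combination -ha - hb
end

section
/- For e = (v_i, v_j) ∈ E_ℓ with 4 ≤ ℓ ≤ n/2 + 2, the set F_{e,ℓ} is a matching on V: its ⌊ℓ/2⌋ - 1 pairs are pairwise disjoint, i.e., the vertices v_{(i+k) mod n} for 1 ≤ k ≤ ⌊ℓ/2⌋ - 1 and v_{(j+ℓ-k-2) mod n} for 1 ≤ k ≤ ⌊ℓ/2⌋ - 1 are 2(⌊ℓ/2⌋ - 1) distinct vertices. -/
theorem stmt15 (n ℓ : ℕ) [NeZero n] (hn : 8 ≤ n) (hl : 4 ≤ ℓ) (hln : 2 * ℓ ≤ n + 4)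
    (i j : ZMod n) (he : (i, j) ∈ chordSet n ℓ) :
    ((Finset.Icc 1 (ℓ / 2 - 1)).image (fun k : ℕ => i + (k : ZMod n)) ∪
        (Finset.Icc 1 (ℓ / 2 - 1)).image
          (fun k : ℕ => j + (ℓ : ZMod n) - (k : ZMod n) - 2)).card
      = 2 * (ℓ / 2 - 1) := by
  simp only [chordSet, Finset.mem_filter, Finset.mem_univ, true_and] at he
  obtain ⟨h1, h2⟩ := he
  set d := (j - i).val with hd
  set m := ℓ / 2 - 1 with hm
  have hdn : d < n := ZMod.val_lt _
  have hkn : ∀ k ∈ Finset.Icc 1 m, k < n := by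
    intro k hk
    rw [Finset.mem_Icc] at hk
    omega
  have hinj1 : Set.InjOn (fun k : ℕ => i + (k : ZMod n)) (Finset.Icc 1 m) := by
    intro a ha b hb h
    have hab : (a : ZMod n) = b := by
      simpa using h
    have := congrArg ZMod.val hab
    rwa [ZMod.val_cast_of_lt (hkn a ha), ZMod.val_cast_of_lt (hkn b hb)] at this
  have hinj2 : Set.InjOn (fun k : ℕ => j + (ℓ : ZMod n) - (k : ZMod n) - 2)
      (Finset.Icc 1 m) := by
    intro a ha b hb h
    have hab : (a : ZMod n) = b := by
      simp only at h
      linear_combination -h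
    have := congrArg ZMod.val hab
    rwa [ZMod.val_cast_of_lt (hkn a ha), ZMod.val_cast_of_lt (hkn b hb)] at this
  have hji : j = i + (d : ZMod n) := by
    rw [hd, ZMod.natCast_val, ZMod.cast_id]
    ring
  have hdisj : Disjoint ((Finset.Icc 1 m).image (fun k : ℕ => i + (k : ZMod n)))
      ((Finset.Icc 1 m).image (fun k : ℕ => j + (ℓ : ZMod n) - (k : ZMod n) - 2)) := by
    rw [Finset.disjoint_left]
    intro x hx1 hx2
    obtain ⟨a, ha, hax⟩ := Finset.mem_image.mp hx1
    obtain ⟨b, hb, hbx⟩ := Finset.mem_image.mp hx2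
    rw [Finset.mem_Icc] at ha hb
    have heq : ((a + b + 2 : ℕ) : ZMod n) = ((d + ℓ : ℕ) : ZMod n) := by
      push_cast
      have := hax.trans hbx.symm
      rw [hji] at this
      linear_combination this
    have hmod : (a + b + 2) % n = (d + ℓ) % n := by
      rwa [ZMod.natCast_eq_natCast_iff'] at heq
    have hle : a + b + 2 ≤ d + ℓ := by omega
    have hdvd : n ∣ (d + ℓ) - (a + b + 2) := (Nat.modEq_iff_dvd' hle).mp hmod
    have hpos : 0 < (d + ℓ) - (a + b + 2) := by omega
    have := Nat.le_of_dvd hpos hdvd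
    omega
  rw [Finset.card_union_of_disjoint hdisj, Finset.card_image_of_injOn hinj1,
    Finset.card_image_of_injOn hinj2, Nat.card_Icc]
  omega
end

section
/- Let G be a graph containing a Hamilton cycle C_n on vertices v_0, ..., v_{n-1} (edges {v_i, v_{(i+1) mod n}}). Suppose G additionally contains an edge e ∈ E_ℓ and an edge f ∈ F_{e,ℓ} for some 4 ≤ ℓ ≤ n/2. Then {ℓ, n - ℓ + 4} ⊆ 𝓛(G), where 𝓛(G) is the set of lengths of cycles in G. -/
lemma cast_nat_inj {n : ℕ} [NeZero n] {a b : ℕ} (ha : a < n) (hb : b < n)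
    (h : (a : ZMod n) = b) : a = b := by
  have := congrArg ZMod.val h
  rwa [ZMod.val_cast_of_lt ha, ZMod.val_cast_of_lt hb] at this

def off1 (k d ℓ r : ℕ) : ℕ := if r ≤ k then r else d + ℓ - 1 - r

def off2 (k d A B r : ℕ) : ℕ :=
  if r = 0 then k else if r ≤ B then A + (r - 1) else if r = B + 1 then 0
  else d - (r - (B + 2))

lemma walk_aux {V : Type*} (G : SimpleGraph V) (c : ℕ → V) :
    ∀ (t s : ℕ), (∀ r, s ≤ r → r < s + t → G.Adj (c r) (c (r+1))) →
    ∃ w : G.Walk (c s) (c (s + t)), w.length = t ∧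
      w.support.tail = (List.range' (s+1) t).map c ∧
      w.edges = (List.range' s t).map (fun r => s(c r, c (r+1))) := by
  intro t
  induction t with
  | zero => intro s _; exact ⟨SimpleGraph.Walk.nil, by simp⟩
  | succ t ih =>
    intro s hadj
    obtain ⟨w, hw1, hw2, hw3⟩ := ih (s+1) (fun r h1 h2 => hadj r (by omega) (by omega))
    have hs : s + (t+1) = (s+1) + t := by omega
    refine ⟨(SimpleGraph.Walk.cons (hadj s le_rfl (by omega)) w).copy rfl (by rw [hs]), ?_, ?_, ?_⟩
    · simp [hw1]
    · simp only [SimpleGraph.Walk.support_copy, SimpleGraph.Walk.support_cons, List.tail_cons,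
        List.range'_succ, List.map_cons]
      rw [w.support_eq_cons, hw2]
    · simp only [SimpleGraph.Walk.edges_copy, SimpleGraph.Walk.edges_cons, List.range'_succ,
        List.map_cons, hw3]

lemma cycle_of_fn {V : Type*} (G : SimpleGraph V) (m : ℕ) (hm : 3 ≤ m)
    (c : ZMod m → V) (hc : Function.Injective c)
    (hadj : ∀ t : ZMod m, G.Adj (c t) (c (t + 1))) : HasCycleLength G m := by
  haveI : NeZero m := ⟨by omega⟩
  have hcast : ∀ r : ℕ, ((r : ZMod m) + 1) = ((r+1 : ℕ) : ZMod m) := by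
    intro r; push_cast; ring
  obtain ⟨w, hw1, hw2, hw3⟩ := walk_aux G (fun r => c (r : ZMod m)) m 0
    (fun r _ _ => by have := hadj (r : ZMod m); rwa [hcast r] at this)
  have h0 : c ((0 + m : ℕ) : ZMod m) = c ((0 : ℕ) : ZMod m) := by norm_num
  have inj2 : ∀ a b : ℕ, a < m → b < m → (a : ZMod m) = (b : ZMod m) → a = b := by
    intro a b ha hb hab
    have := congrArg ZMod.val hab
    rwa [ZMod.val_cast_of_lt ha, ZMod.val_cast_of_lt hb] at this
  refine ⟨c ((0:ℕ) : ZMod m), w.copy rfl h0, ⟨⟨⟨?_⟩, ?_⟩, ?_⟩, by simpa using hw1⟩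
  · -- edges nodup
    rw [SimpleGraph.Walk.edges_copy, hw3]
    refine List.Nodup.map_on ?_ (List.nodup_range' (h := Nat.one_pos))
    intro x hx y hy hxy
    simp only [List.mem_range'_1] at hx hy
    have hx' : x < m := by omega
    have hy' : y < m := by omega
    simp only [Sym2.eq, Sym2.rel_iff', Prod.mk.injEq, Prod.swap_prod_mk] at hxy
    rcases hxy with ⟨h1, _⟩ | ⟨h1, h2⟩
    · exact inj2 x y hx' hy' (hc h1)
    · exfalso
      have e1 : (x : ZMod m) = ((y+1 : ℕ) : ZMod m) := hc h1
      have e2 : ((x+1 : ℕ) : ZMod m) = (y : ZMod m) := hc h2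
      push_cast at e1 e2
      have h20 : ((2:ℕ) : ZMod m) = ((0:ℕ) : ZMod m) := by
        have h := e2; rw [e1] at h
        push_cast
        linear_combination h
      have := inj2 2 0 (by omega) (by omega) h20
      omega
  · -- ne nil
    intro h
    have := congrArg SimpleGraph.Walk.length h
    rw [SimpleGraph.Walk.length_copy, hw1] at this
    simp at this; omega
  · -- support tail nodup
    rw [SimpleGraph.Walk.support_copy, hw2]
    refine List.Nodup.map_on ?_ (List.nodup_range' (h := Nat.one_pos))
    intro x hx y hy hxy
    simp only [List.mem_range'_1] at hx hy
    have h1 : (x : ZMod m) = y := hc hxy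
    have hmod := (ZMod.natCast_eq_natCast_iff _ _ _).mp h1
    rcases le_or_gt x y with h | h
    · have := (Nat.modEq_iff_dvd' h).mp hmod
      have : m ∣ y - x := this
      rcases this with ⟨q, hq⟩
      rcases q with _ | q
      · omega
      · have : m ≤ m * (q+1) := Nat.le_mul_of_pos_right m (by omega)
        omega
    · have := (Nat.modEq_iff_dvd' h.le).mp hmod.symm
      rcases this with ⟨q, hq⟩
      rcases q with _ | q
      · omega
      · have : m ≤ m * (q+1) := Nat.le_mul_of_pos_right m (by omega)
        omega

theorem stmt17 (n ℓ : ℕ) [NeZero n] (hn : 8 ≤ n) (hl : 4 ≤ ℓ) (hln : 2 * ℓ ≤ n)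
    (G : SimpleGraph (ZMod n))
    (hC : ∀ a : ZMod n, G.Adj a (a + 1))
    (i j : ZMod n)
    (hij1 : ℓ ≤ 2 * (j - i).val) (hij2 : 2 * (j - i).val ≤ n)
    (he : G.Adj i j)
    (hf : ∃ k : ℕ, 1 ≤ k ∧ k ≤ ℓ / 2 - 1 ∧
      G.Adj (i + (k : ZMod n)) (j + (ℓ : ZMod n) - (k : ZMod n) - 2)) :
    HasCycleLength G ℓ ∧ HasCycleLength G (n - ℓ + 4) := by
  obtain ⟨k, hk1, hk2, hfadj⟩ := hf
  obtain ⟨d, hd⟩ : ∃ d : ℕ, d = (j - i).val := ⟨_, rfl⟩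
  rw [← hd] at hij1 hij2
  have hdn : d < n := hd ▸ ZMod.val_lt _
  have hk2' : 2 * k + 2 ≤ ℓ := by omega
  have hkd : k < d := by omega
  have hAn : d + ℓ ≤ n := by omega
  obtain ⟨A, hA⟩ : ∃ A : ℕ, A = d + ℓ - k - 2 := ⟨_, rfl⟩
  obtain ⟨B, hB⟩ : ∃ B : ℕ, B = n - A := ⟨_, rfl⟩
  have hji : j = i + (d : ZMod n) := by
    rw [hd, ZMod.natCast_val, ZMod.cast_id]; ring
  -- Hamilton step on offsets
  have ham : ∀ a b : ℕ, b = a + 1 → G.Adj (i + (a : ZMod n)) (i + (b : ZMod n)) := by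
    intro a b hb; subst hb; push_cast
    simpa [add_assoc] using hC (i + (a : ZMod n))
  -- wrap-around edge
  have hwrap : G.Adj (i + ((n - 1 : ℕ) : ZMod n)) (i + ((0 : ℕ) : ZMod n)) := by
    have h1 : (((n - 1 : ℕ) : ZMod n)) + 1 = 0 := by
      have h2 : ((n - 1 : ℕ) + 1 : ℕ) = n := by omega
      have h3 := congrArg (Nat.cast : ℕ → ZMod n) h2
      push_cast at h3
      rw [h3]; exact ZMod.natCast_self n
    have h4 := hC (i + ((n - 1 : ℕ) : ZMod n))
    rw [add_assoc, h1] at h4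
    simpa using h4
  -- chord e on offsets
  have he' : G.Adj (i + ((0 : ℕ) : ZMod n)) (i + ((d : ℕ) : ZMod n)) := by
    simpa [← hji] using he
  -- chord f on offsets
  have hfa : G.Adj (i + (k : ZMod n)) (i + ((A : ℕ) : ZMod n)) := by
    have hAc : ((A : ℕ) : ZMod n) = (d : ZMod n) + ℓ - k - 2 := by
      have h2 : A + k + 2 = d + ℓ := by omega
      have h3 := congrArg (Nat.cast : ℕ → ZMod n) h2
      push_cast at h3
      linear_combination h3
    have h5 : j + (ℓ : ZMod n) - k - 2 = i + ((A : ℕ) : ZMod n) := by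
      rw [hji, hAc]; ring
    rwa [h5] at hfadj
  constructor
  · -- cycle of length ℓ
    haveI : NeZero ℓ := ⟨by omega⟩
    have hbound : ∀ r, r < ℓ → off1 k d ℓ r < n := by
      intro r hr; simp only [off1]; split_ifs <;> first | (exfalso; exact ‹False›) | omega
    apply cycle_of_fn G ℓ (by omega) (fun t => i + ((off1 k d ℓ t.val : ℕ) : ZMod n))
    · intro t t' h
      have h2 : ((off1 k d ℓ t.val : ℕ) : ZMod n) = off1 k d ℓ t'.val :=
        add_left_cancel h
      have h3 := cast_nat_inj (hbound _ t.val_lt) (hbound _ t'.val_lt) h2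
      have ht : t.val < ℓ := t.val_lt
      have ht' : t'.val < ℓ := t'.val_lt
      have h4 : t.val = t'.val := by
        simp only [off1] at h3; split_ifs at h3 <;> omega
      have h5 := congrArg (Nat.cast : ℕ → ZMod ℓ) h4
      simpa [ZMod.natCast_val, ZMod.cast_id] using h5
    · intro t
      have hal : t.val < ℓ := t.val_lt
      have hsucc : (t + 1).val = (t.val + 1) % ℓ := by
        have h1 : (1 : ZMod ℓ) = ((1 : ℕ) : ZMod ℓ) := by norm_cast
        rw [ZMod.val_add, h1, ZMod.val_cast_of_lt (by omega)]
      rcases lt_trichotomy t.val k with h | h | h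
      · have e1 : off1 k d ℓ t.val = t.val := by simp only [off1]; split_ifs <;> first | (exfalso; exact ‹False›) | omega
        have e2 : off1 k d ℓ ((t.val + 1) % ℓ) = t.val + 1 := by
          rw [Nat.mod_eq_of_lt (by omega)]; simp only [off1]; split_ifs <;> first | (exfalso; exact ‹False›) | omega
        rw [hsucc, e1, e2]; exact ham t.val (t.val + 1) rfl
      · have e1 : off1 k d ℓ t.val = k := by simp only [off1]; split_ifs <;> first | (exfalso; exact ‹False›) | omega
        have e2 : off1 k d ℓ ((t.val + 1) % ℓ) = A := by
          rw [Nat.mod_eq_of_lt (by omega)]; simp only [off1]; split_ifs <;> first | (exfalso; exact ‹False›) | omega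
        rw [hsucc, e1, e2]; exact hfa
      · rcases eq_or_lt_of_le (show t.val + 1 ≤ ℓ from hal) with h2 | h2
        · have e1 : off1 k d ℓ t.val = d := by simp only [off1]; split_ifs <;> first | (exfalso; exact ‹False›) | omega
          have e2 : off1 k d ℓ ((t.val + 1) % ℓ) = 0 := by
            have h3 : (t.val + 1) % ℓ = 0 := by rw [h2, Nat.mod_self]
            rw [h3]; simp only [off1]; split_ifs <;> first | (exfalso; exact ‹False›) | omega
          rw [hsucc, e1, e2]; exact he'.symm
        · have e1 : off1 k d ℓ t.val = d + ℓ - 1 - t.val := by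
            simp only [off1]; split_ifs <;> first | (exfalso; exact ‹False›) | omega
          have e2 : off1 k d ℓ ((t.val + 1) % ℓ) = d + ℓ - 2 - t.val := by
            rw [Nat.mod_eq_of_lt (by omega)]; simp only [off1]; split_ifs <;> first | (exfalso; exact ‹False›) | omega
          rw [hsucc, e1, e2]
          exact (ham (d + ℓ - 2 - t.val) (d + ℓ - 1 - t.val) (by omega)).symm
  · -- cycle of length n - ℓ + 4
    haveI : NeZero (n - ℓ + 4) := ⟨by omega⟩
    have hbound : ∀ r, r < n - ℓ + 4 → off2 k d A B r < n := by
      intro r hr; simp only [off2]; split_ifs <;> first | (exfalso; exact ‹False›) | omega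
    apply cycle_of_fn G (n - ℓ + 4) (by omega)
      (fun t => i + ((off2 k d A B t.val : ℕ) : ZMod n))
    · intro t t' h
      have h2 : ((off2 k d A B t.val : ℕ) : ZMod n) = off2 k d A B t'.val :=
        add_left_cancel h
      have h3 := cast_nat_inj (hbound _ t.val_lt) (hbound _ t'.val_lt) h2
      have ht : t.val < n - ℓ + 4 := t.val_lt
      have ht' : t'.val < n - ℓ + 4 := t'.val_lt
      have h4 : t.val = t'.val := by
        simp only [off2] at h3; split_ifs at h3 <;> omega
      have h5 := congrArg (Nat.cast : ℕ → ZMod (n - ℓ + 4)) h4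
      simpa [ZMod.natCast_val, ZMod.cast_id] using h5
    · intro t
      have hal : t.val < n - ℓ + 4 := t.val_lt
      have hsucc : (t + 1).val = (t.val + 1) % (n - ℓ + 4) := by
        have h1 : (1 : ZMod (n - ℓ + 4)) = ((1 : ℕ) : ZMod (n - ℓ + 4)) := by norm_cast
        rw [ZMod.val_add, h1, ZMod.val_cast_of_lt (by omega)]
      rcases Nat.eq_or_lt_of_le (Nat.zero_le t.val) with h0 | h0
      · have e1 : off2 k d A B t.val = k := by simp only [off2]; split_ifs <;> first | (exfalso; exact ‹False›) | omega
        have e2 : off2 k d A B ((t.val + 1) % (n - ℓ + 4)) = A := by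
          rw [Nat.mod_eq_of_lt (by omega)]; simp only [off2]; split_ifs <;> first | (exfalso; exact ‹False›) | omega
        rw [hsucc, e1, e2]; exact hfa
      · rcases lt_trichotomy t.val B with h1 | h1 | h1
        · have e1 : off2 k d A B t.val = A + (t.val - 1) := by
            simp only [off2]; split_ifs <;> first | (exfalso; exact ‹False›) | omega
          have e2 : off2 k d A B ((t.val + 1) % (n - ℓ + 4)) = A + t.val := by
            rw [Nat.mod_eq_of_lt (by omega)]; simp only [off2]; split_ifs <;> first | (exfalso; exact ‹False›) | omega
          rw [hsucc, e1, e2]; exact ham _ _ (by omega)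
        · have e1 : off2 k d A B t.val = n - 1 := by
            simp only [off2]; split_ifs <;> first | (exfalso; exact ‹False›) | omega
          have e2 : off2 k d A B ((t.val + 1) % (n - ℓ + 4)) = 0 := by
            rw [Nat.mod_eq_of_lt (by omega)]; simp only [off2]; split_ifs <;> first | (exfalso; exact ‹False›) | omega
          rw [hsucc, e1, e2]; exact hwrap
        · rcases Nat.eq_or_lt_of_le h1 with h2 | h2
          · have e1 : off2 k d A B t.val = 0 := by simp only [off2]; split_ifs <;> first | (exfalso; exact ‹False›) | omega
            have e2 : off2 k d A B ((t.val + 1) % (n - ℓ + 4)) = d := by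
              rw [Nat.mod_eq_of_lt (by omega)]; simp only [off2]; split_ifs <;> first | (exfalso; exact ‹False›) | omega
            rw [hsucc, e1, e2]; exact he'
          · rcases eq_or_lt_of_le (show t.val + 1 ≤ n - ℓ + 4 from hal) with h3 | h3
            · have e1 : off2 k d A B t.val = k + 1 := by
                simp only [off2]; split_ifs <;> first | (exfalso; exact ‹False›) | omega
              have e2 : off2 k d A B ((t.val + 1) % (n - ℓ + 4)) = k := by
                have h4 : (t.val + 1) % (n - ℓ + 4) = 0 := by rw [h3, Nat.mod_self]
                rw [h4]; simp only [off2]; split_ifs <;> first | (exfalso; exact ‹False›) | omega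
              rw [hsucc, e1, e2]; exact (ham k (k + 1) rfl).symm
            · have e1 : off2 k d A B t.val = d - (t.val - (B + 2)) := by
                simp only [off2]; split_ifs <;> first | (exfalso; exact ‹False›) | omega
              have e2 : off2 k d A B ((t.val + 1) % (n - ℓ + 4)) =
                  d - (t.val + 1 - (B + 2)) := by
                rw [Nat.mod_eq_of_lt (by omega)]; simp only [off2]; split_ifs <;> first | (exfalso; exact ‹False›) | omega
              rw [hsucc, e1, e2]
              exact (ham (d - (t.val + 1 - (B + 2))) (d - (t.val - (B + 2))) (by omega)).symm
end
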